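/- arXiv:2007.08483 — 2 statements merged into one kernel-verified Lean document; each statement's English description precedes it below -/
import Mathlib

section
/- Let p_1, p_2, ... be independent identically distributed random variables with values in the interval [ε₀, 1] for some ε₀ > 0, with mean μ = E[p_1], and let p̄_n = (1/n)·∑_{i=1}^n p_i. Define R₄(μ − x) = −log(x/μ) − ∑_{k=1}^4 (μ − x)^k/(k·μ^k) for x ∈ [ε₀, 1]. Then E[R₄(μ − p̄_n)] = O(1/n²); that is, there exist a constant C > 0 and a positive integer N such that |E[R₄(μ − p̄_n)]| ≤ C/n² for all n ≥ N. -/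
open MeasureTheory ProbabilityTheory Filter

/-- The Taylor remainder of the logarithm:
`R_m(μ - x) = -log(x/μ) - ∑_{k=1}^m (μ - x)^k/(k μ^k)`. -/
noncomputable def taylorRem (m : ℕ) (μ x : ℝ) : ℝ :=
  -Real.log (x / μ) - ∑ k ∈ Finset.Icc 1 m, (μ - x) ^ k / ((k : ℝ) * μ ^ k)

lemma taylorRem_expand (μ x : ℝ) :
    taylorRem 4 μ x = -Real.log (x / μ) -
      ((μ - x) / (1 * μ) + (μ - x)^2 / (2 * μ^2) + (μ - x)^3 / (3 * μ^3)
        + (μ - x)^4 / (4 * μ^4)) := by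
  have h : Finset.Icc 1 4 = ({1, 2, 3, 4} : Finset ℕ) := by decide
  rw [taylorRem, h]
  norm_num [Finset.sum_insert, Finset.mem_insert]
  ring

lemma taylorRem_hasDerivAt {μ x : ℝ} (hμ : 0 < μ) (hx : 0 < x) :
    HasDerivAt (taylorRem 4 μ) (-(μ - x)^4 / (μ^4 * x)) x := by
  have hμx : HasDerivAt (fun y : ℝ => μ - y) (-1) x := by
    simpa using (hasDerivAt_id x).const_sub μ
  have h1 : HasDerivAt (fun y : ℝ => (μ - y) / (1 * μ)) (-1 / (1 * μ)) x :=
    hμx.div_const _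
  have h2 : HasDerivAt (fun y : ℝ => (μ - y)^2 / (2 * μ^2))
      ((2 * (μ - x)^1 * (-1)) / (2 * μ^2)) x := (hμx.pow 2).div_const _
  have h3 : HasDerivAt (fun y : ℝ => (μ - y)^3 / (3 * μ^3))
      ((3 * (μ - x)^2 * (-1)) / (3 * μ^3)) x := (hμx.pow 3).div_const _
  have h4 : HasDerivAt (fun y : ℝ => (μ - y)^4 / (4 * μ^4))
      ((4 * (μ - x)^3 * (-1)) / (4 * μ^4)) x := (hμx.pow 4).div_const _
  have hlog : HasDerivAt (fun y : ℝ => -Real.log (y / μ)) (-x⁻¹) x := by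
    have hl : HasDerivAt (fun y : ℝ => Real.log y - Real.log μ) x⁻¹ x := by
      simpa using (Real.hasDerivAt_log hx.ne').sub_const (Real.log μ)
    have heq : (fun y : ℝ => Real.log (y / μ)) =ᶠ[nhds x]
        (fun y : ℝ => Real.log y - Real.log μ) := by
      filter_upwards [eventually_gt_nhds hx] with y hy
      rw [Real.log_div hy.ne' hμ.ne']
    exact ((hl.congr_of_eventuallyEq heq)).neg
  have := ((hlog.sub (((h1.add h2).add h3).add h4)).congr_of_eventuallyEq
    (by filter_upwards with y; exact taylorRem_expand μ y))
  refine this.congr_deriv ?_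
  field_simp
  ring

lemma taylorRem_self {μ : ℝ} (hμ : μ ≠ 0) : taylorRem 4 μ μ = 0 := by
  rw [taylorRem, div_self hμ, Real.log_one, Finset.sum_eq_zero, neg_zero, sub_zero]
  intro k hk
  rw [Finset.mem_Icc] at hk
  rw [sub_self, zero_pow (by omega), zero_div]

lemma taylorRem_abs_le {ε₀ μ x : ℝ} (hε : 0 < ε₀)
    (hμ : μ ∈ Set.Icc ε₀ 1) (hx : x ∈ Set.Icc ε₀ 1) :
    |taylorRem 4 μ x| ≤ (μ - x)^4 / ε₀^5 := by
  have hμ0 : 0 < μ := lt_of_lt_of_le hε hμ.1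
  have hsub : Set.uIcc x μ ⊆ Set.Icc ε₀ 1 :=
    (Set.ordConnected_Icc).uIcc_subset hx hμ
  have key : ∀ y ∈ Set.uIcc x μ, HasDerivWithinAt (taylorRem 4 μ)
      (-(μ - y)^4 / (μ^4 * y)) (Set.uIcc x μ) y := fun y hy =>
    (taylorRem_hasDerivAt hμ0 (lt_of_lt_of_le hε (hsub hy).1)).hasDerivWithinAt
  have bound : ∀ y ∈ Set.uIcc x μ,
      ‖-(μ - y)^4 / (μ^4 * y)‖ ≤ (μ - x)^4 / ε₀^5 := by
    intro y hy
    have hy1 : ε₀ ≤ y := (hsub hy).1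
    have habs : |μ - y| ≤ |μ - x| := by
      rcases Set.mem_uIcc.1 hy with ⟨h1, h2⟩ | ⟨h1, h2⟩ <;>
        rw [abs_le] <;> constructor <;>
        · rcases le_total x μ with h | h <;> rcases abs_cases (μ - x) with ⟨he, _⟩ | ⟨he, _⟩ <;>
            nlinarith
    have hy4 : (0:ℝ) ≤ (μ - y)^4 := Even.pow_nonneg (by decide) _
    have hx4 : (0:ℝ) ≤ (μ - x)^4 := Even.pow_nonneg (by decide) _
    have hnum : (μ - y)^4 ≤ (μ - x)^4 := by
      calc (μ - y)^4 = |μ - y|^4 := by rw [← abs_pow, abs_of_nonneg hy4]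
        _ ≤ |μ - x|^4 := pow_le_pow_left₀ (abs_nonneg _) habs 4
        _ = (μ - x)^4 := by rw [← abs_pow, abs_of_nonneg hx4]
    rw [Real.norm_eq_abs, abs_div, abs_neg, abs_of_nonneg hy4,
      abs_of_nonneg (mul_nonneg (by positivity) (hε.le.trans hy1))]
    have hden : ε₀^5 ≤ μ^4 * y := by
      have h4 : ε₀^4 ≤ μ^4 := pow_le_pow_left₀ hε.le hμ.1 4
      calc ε₀^5 = ε₀^4 * ε₀ := by ring
        _ ≤ μ^4 * y := mul_le_mul h4 hy1 hε.le (by positivity)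
    exact div_le_div₀ hx4 hnum (by positivity) hden

  have mvt := (convex_uIcc x μ).norm_image_sub_le_of_norm_hasDerivWithin_le key bound
    Set.right_mem_uIcc Set.left_mem_uIcc
  rw [taylorRem_self hμ0.ne', sub_zero, Real.norm_eq_abs, Real.norm_eq_abs] at mvt
  have hxm : |x - μ| ≤ 1 := by
    rw [abs_le]; constructor <;> [nlinarith [hx.1, hμ.2]; nlinarith [hx.2, hμ.1, hε]]
  calc |taylorRem 4 μ x| ≤ (μ - x)^4 / ε₀^5 * |x - μ| := mvt
    _ ≤ (μ - x)^4 / ε₀^5 * 1 := mul_le_mul_of_nonneg_left hxm (by positivity)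
    _ = (μ - x)^4 / ε₀^5 := mul_one _

lemma integrable_of_bdd {Ω : Type*} [MeasurableSpace Ω] {P : Measure Ω} [IsFiniteMeasure P]
    {f : Ω → ℝ} {C : ℝ} (hf : Measurable f) (h : ∀ ω, |f ω| ≤ C) : Integrable f P :=
  ⟨hf.aestronglyMeasurable,
    HasFiniteIntegral.of_bounded (C := C) (ae_of_all _ fun ω => by
      simpa [Real.norm_eq_abs] using h ω)⟩

/-- For i.i.d. `p i` with values in `[ε₀, 1]`, `ε₀ > 0`, mean `μ`, the expectation of the
fourth-order Taylor remainder satisfies `E[R₄(μ - p̄_n)] = O(1/n²)`. -/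
theorem remainder_four_is_O_inv_sq
    {Ω : Type*} [MeasurableSpace Ω] (P : Measure Ω) [IsProbabilityMeasure P]
    (ε₀ : ℝ) (hε₀ : 0 < ε₀)
    (p : ℕ → Ω → ℝ) (hmeas : ∀ i, Measurable (p i))
    (hrange : ∀ i ω, p i ω ∈ Set.Icc ε₀ 1)
    (hindep : iIndepFun p P)
    (hident : ∀ i, IdentDistrib (p i) (p 0) P P)
    (μ : ℝ) (hμ : μ = ∫ ω, p 0 ω ∂P) :
    ∃ C > (0 : ℝ), ∃ N : ℕ, 0 < N ∧ ∀ n : ℕ, N ≤ n →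
      |∫ ω, taylorRem 4 μ ((∑ i ∈ Finset.range n, p i ω) / n) ∂P| ≤ C / (n : ℝ) ^ 2 := by
  -- integrability of the p i
  have hp_abs : ∀ i ω, |p i ω| ≤ 1 := fun i ω =>
    abs_le.2 ⟨by linarith [(hrange i ω).1, hε₀], (hrange i ω).2⟩
  have hp_int : ∀ i, Integrable (p i) P := fun i => integrable_of_bdd (hmeas i) (hp_abs i)
  -- μ ∈ [ε₀, 1]
  have hμmem : μ ∈ Set.Icc ε₀ 1 := by
    constructor
    · rw [hμ]
      have := integral_mono (integrable_const ε₀) (hp_int 0) (fun ω => (hrange 0 ω).1)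
      simpa using this
    · rw [hμ]
      have := integral_mono (hp_int 0) (integrable_const 1) (fun ω => (hrange 0 ω).2)
      simpa using this
  -- the centered variables
  set q : ℕ → Ω → ℝ := fun i ω => p i ω - μ with hq_def
  have hqmeas : ∀ i, Measurable (q i) := fun i => (hmeas i).sub measurable_const
  have hqbdd : ∀ i ω, |q i ω| ≤ 1 := by
    intro i ω
    rw [abs_le]
    constructor
    · have := (hrange i ω).1; have := hμmem.2; simp only [hq_def]; linarith
    · have := (hrange i ω).2; have := hμmem.1; simp only [hq_def]; linarith
  have hqindep : iIndepFun q P :=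
    hindep.comp (fun _ x => x - μ) (fun _ => measurable_id.sub measurable_const)
  -- partial sums
  set S : ℕ → Ω → ℝ := fun n ω => ∑ i ∈ Finset.range n, q i ω with hS_def
  have hSmeas : ∀ n, Measurable (S n) := fun n =>
    Finset.measurable_sum _ (fun i _ => hqmeas i)
  have hSbdd : ∀ n ω, |S n ω| ≤ n := by
    intro n ω
    calc |S n ω| ≤ ∑ i ∈ Finset.range n, |q i ω| := Finset.abs_sum_le_sum_abs _ _
      _ ≤ ∑ i ∈ Finset.range n, (1:ℝ) := Finset.sum_le_sum (fun i _ => hqbdd i ω)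
      _ = n := by simp
  -- integrability of powers
  have hq_int_pow : ∀ i k, Integrable (fun ω => (q i ω)^k) P := fun i k =>
    integrable_of_bdd ((hqmeas i).pow_const k) (C := 1) (fun ω => by
      rw [abs_pow]; exact pow_le_one₀ (abs_nonneg _) (hqbdd i ω))
  have hS_int_pow : ∀ n k, Integrable (fun ω => (S n ω)^k) P := fun n k =>
    integrable_of_bdd ((hSmeas n).pow_const k) (C := (n:ℝ)^k) (fun ω => by
      rw [abs_pow]; exact pow_le_pow_left₀ (abs_nonneg _) (hSbdd n ω) k)
  have hmixed_int : ∀ n a b, Integrable (fun ω => (S n ω)^a * (q n ω)^b) P := fun n a b =>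
    integrable_of_bdd (((hSmeas n).pow_const a).mul ((hqmeas n).pow_const b))
      (C := (n:ℝ)^a) (fun ω => by
        rw [abs_mul, abs_pow, abs_pow]
        have h1 : |S n ω|^a ≤ (n:ℝ)^a := pow_le_pow_left₀ (abs_nonneg _) (hSbdd n ω) a
        have h2 : |q n ω|^b ≤ 1 := pow_le_one₀ (abs_nonneg _) (hqbdd n ω)
        calc |S n ω|^a * |q n ω|^b ≤ (n:ℝ)^a * 1 :=
              mul_le_mul h1 h2 (by positivity) (by positivity)
          _ = (n:ℝ)^a := mul_one _)
  -- first moments vanish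
  have hq0 : ∀ i, ∫ ω, q i ω ∂P = 0 := by
    intro i
    have : ∫ ω, q i ω ∂P = (∫ ω, p i ω ∂P) - ∫ _ω, μ ∂P :=
      integral_sub (hp_int i) (integrable_const μ)
    rw [this, (hident i).integral_eq, ← hμ]
    simp
  have hS0 : ∀ n, ∫ ω, S n ω ∂P = 0 := by
    intro n
    simp only [hS_def]
    rw [integral_finset_sum _ (fun i _ => integrable_of_bdd (hqmeas i) (hqbdd i))]
    exact Finset.sum_eq_zero (fun i _ => hq0 i)
  -- independence of S n and q n
  have hindepSq : ∀ n, IndepFun (S n) (q n) P := by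
    intro n
    have h := hqindep.indepFun_finsetSum_of_notMem hqmeas (Finset.notMem_range_self (n := n))
    have hfun : (∑ i ∈ Finset.range n, q i) = S n := by
      funext ω; simp [hS_def]
    rwa [hfun] at h
  have hmul : ∀ n a b, ∫ ω, (S n ω)^a * (q n ω)^b ∂P
      = (∫ ω, (S n ω)^a ∂P) * ∫ ω, (q n ω)^b ∂P := fun n a b =>
    ((hindepSq n).comp (measurable_id.pow_const a) (measurable_id.pow_const b)).integral_mul_eq_mul_integral
      (hS_int_pow n a).aestronglyMeasurable (hq_int_pow n b).aestronglyMeasurable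
  -- moment bounds on q
  have hq_pow_le_one : ∀ i k, ∫ ω, (q i ω)^k ∂P ≤ 1 := by
    intro i k
    have := integral_mono (hq_int_pow i k) (integrable_const 1) (fun ω => by
      calc (q i ω)^k ≤ |(q i ω)^k| := le_abs_self _
        _ = |q i ω|^k := abs_pow _ _
        _ ≤ 1 := pow_le_one₀ (abs_nonneg _) (hqbdd i ω))
    simpa using this
  have hq_sq_nonneg : ∀ i, 0 ≤ ∫ ω, (q i ω)^2 ∂P := fun i =>
    integral_nonneg (fun ω => sq_nonneg _)
  have hS_sq_nonneg : ∀ n, 0 ≤ ∫ ω, (S n ω)^2 ∂P := fun n =>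
    integral_nonneg (fun ω => sq_nonneg _)
  have hSsucc : ∀ n ω, S (n+1) ω = S n ω + q n ω := fun n ω => Finset.sum_range_succ _ n
  -- second moment bound
  have hm2 : ∀ n, ∫ ω, (S n ω)^2 ∂P ≤ n := by
    intro n
    induction n with
    | zero => simp [hS_def]
    | succ n ih =>
      have heq : (fun ω => (S (n+1) ω)^2)
          = fun ω => (S n ω)^2 + (2*((S n ω)^1*(q n ω)^1) + (q n ω)^2) := by
        funext ω; rw [hSsucc]; ring
      have iA : Integrable (fun ω => 2*((S n ω)^1*(q n ω)^1) + (q n ω)^2) P := by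
        exact ((hmixed_int n 1 1).const_mul 2).add (hq_int_pow n 2)
      have iB : Integrable (fun ω => 2*((S n ω)^1*(q n ω)^1)) P := by
        exact (hmixed_int n 1 1).const_mul 2
      rw [heq, integral_add (hS_int_pow n 2) iA,
        integral_add iB (hq_int_pow n 2),
        integral_const_mul _, hmul n 1 1]
      simp only [pow_one, hq0 n, mul_zero]
      push_cast
      have := hq_pow_le_one n 2
      linarith
  -- fourth moment bound
  have hm4 : ∀ n, ∫ ω, (S n ω)^4 ∂P ≤ 3 * (n:ℝ)^2 := by
    intro n
    induction n with
    | zero => simp [hS_def]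
    | succ n ih =>
      have heq : (fun ω => (S (n+1) ω)^4)
          = fun ω => (S n ω)^4 + (4*((S n ω)^3*(q n ω)^1)
            + (6*((S n ω)^2*(q n ω)^2) + (4*((S n ω)^1*(q n ω)^3) + (q n ω)^4))) := by
        funext ω; rw [hSsucc]; ring
      have i31 : Integrable (fun ω => 4*((S n ω)^3*(q n ω)^1)) P := by
        exact (hmixed_int n 3 1).const_mul 4
      have i22 : Integrable (fun ω => 6*((S n ω)^2*(q n ω)^2)) P := by
        exact (hmixed_int n 2 2).const_mul 6
      have i13 : Integrable (fun ω => 4*((S n ω)^1*(q n ω)^3)) P := by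
        exact (hmixed_int n 1 3).const_mul 4
      have iC : Integrable (fun ω => 4*((S n ω)^1*(q n ω)^3) + (q n ω)^4) P := by
        exact i13.add (hq_int_pow n 4)
      have iD : Integrable (fun ω => 6*((S n ω)^2*(q n ω)^2)
          + (4*((S n ω)^1*(q n ω)^3) + (q n ω)^4)) P := by exact i22.add iC
      have iE : Integrable (fun ω => 4*((S n ω)^3*(q n ω)^1)
          + (6*((S n ω)^2*(q n ω)^2) + (4*((S n ω)^1*(q n ω)^3) + (q n ω)^4))) P := by
        exact i31.add iD
      rw [heq, integral_add (hS_int_pow n 4) iE,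
        integral_add i31 iD,
        integral_add i22 iC,
        integral_add i13 (hq_int_pow n 4),
        integral_const_mul _, integral_const_mul _, integral_const_mul _,
        hmul n 3 1, hmul n 2 2, hmul n 1 3]
      simp only [pow_one, hq0 n, mul_zero, hS0 n, zero_mul, add_zero, zero_add]
      have h22 : (∫ ω, (S n ω)^2 ∂P) * ∫ ω, (q n ω)^2 ∂P ≤ (n:ℝ) * 1 :=
        mul_le_mul (hm2 n) (hq_pow_le_one n 2) (hq_sq_nonneg n) (Nat.cast_nonneg n)
      have h4 := hq_pow_le_one n 4
      push_cast
      nlinarith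
  -- conclusion
  refine ⟨3 / ε₀^5, by positivity, 1, one_pos, fun n hn => ?_⟩
  have hn0 : (0:ℝ) < n := by exact_mod_cast hn
  set g : Ω → ℝ := fun ω => (∑ i ∈ Finset.range n, p i ω) / n with hg_def
  have hgmeas : Measurable g :=
    (Finset.measurable_sum _ (fun i _ => hmeas i)).div_const _
  have hgmem : ∀ ω, g ω ∈ Set.Icc ε₀ 1 := by
    intro ω
    constructor
    · rw [hg_def, le_div_iff₀ hn0]
      calc ε₀ * n = ∑ _i ∈ Finset.range n, ε₀ := by
            rw [Finset.sum_const, Finset.card_range, nsmul_eq_mul]; ring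
        _ ≤ ∑ i ∈ Finset.range n, p i ω := Finset.sum_le_sum (fun i _ => (hrange i ω).1)
    · rw [hg_def, div_le_one hn0]
      calc ∑ i ∈ Finset.range n, p i ω ≤ ∑ _i ∈ Finset.range n, (1:ℝ) :=
            Finset.sum_le_sum (fun i _ => (hrange i ω).2)
        _ = n := by simp
  have hgS : ∀ ω, (μ - g ω)^4 = (S n ω)^4 / (n:ℝ)^4 := by
    intro ω
    have hSω : S n ω = (∑ i ∈ Finset.range n, p i ω) - n * μ := by
      simp only [hS_def, hq_def, Finset.sum_sub_distrib, Finset.sum_const, Finset.card_range,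
        nsmul_eq_mul]
    have : μ - g ω = -(S n ω) / n := by
      rw [hg_def, hSω]; field_simp; ring
    rw [this]; field_simp
  have hptw : ∀ ω, |taylorRem 4 μ (g ω)| ≤ (S n ω)^4 / ((n:ℝ)^4 * ε₀^5) := by
    intro ω
    calc |taylorRem 4 μ (g ω)| ≤ (μ - g ω)^4 / ε₀^5 :=
          taylorRem_abs_le hε₀ hμmem (hgmem ω)
      _ = (S n ω)^4 / ((n:ℝ)^4 * ε₀^5) := by rw [hgS ω]; field_simp
  have hfmeas : Measurable (fun ω => taylorRem 4 μ (g ω)) := by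
    simp only [taylorRem]
    exact ((Real.measurable_log.comp (hgmeas.div_const μ)).neg).sub
      (Finset.measurable_sum _ (fun k _ =>
        ((measurable_const.sub hgmeas).pow_const k).div_const _))
  have hf_int : Integrable (fun ω => taylorRem 4 μ (g ω)) P := by
    refine integrable_of_bdd hfmeas (C := 1 / ε₀^5) (fun ω => ?_)
    calc |taylorRem 4 μ (g ω)| ≤ (μ - g ω)^4 / ε₀^5 := taylorRem_abs_le hε₀ hμmem (hgmem ω)
      _ ≤ 1 / ε₀^5 := by
          have h1 : |μ - g ω| ≤ 1 := by
            have hg1 := (hgmem ω).1; have hg2 := (hgmem ω).2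
            have hμ1 := hμmem.1; have hμ2 := hμmem.2
            rw [abs_le]; constructor <;> linarith
          have h2 : (μ - g ω)^4 ≤ 1 := by
            calc (μ - g ω)^4 = |μ - g ω|^4 := by
                  rw [← abs_pow, abs_of_nonneg (Even.pow_nonneg (by decide) _)]
              _ ≤ 1 := pow_le_one₀ (abs_nonneg _) h1
          exact div_le_div₀ zero_le_one h2 (by positivity) le_rfl
  calc |∫ ω, taylorRem 4 μ (g ω) ∂P| ≤ ∫ ω, |taylorRem 4 μ (g ω)| ∂P := by
        simpa [Real.norm_eq_abs] using
          norm_integral_le_integral_norm (μ := P) (fun ω => taylorRem 4 μ (g ω))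
    _ ≤ ∫ ω, (S n ω)^4 / ((n:ℝ)^4 * ε₀^5) ∂P :=
        integral_mono hf_int.abs ((hS_int_pow n 4).div_const _) hptw
    _ = (∫ ω, (S n ω)^4 ∂P) / ((n:ℝ)^4 * ε₀^5) := integral_div _ _
    _ ≤ (3*(n:ℝ)^2) / ((n:ℝ)^4 * ε₀^5) :=
        div_le_div₀ (by positivity) (hm4 n) (by positivity) le_rfl
    _ = (3/ε₀^5) / (n:ℝ)^2 := by
        field_simp
end

section
/- Let p_1, p_2, ... be independent identically distributed random variables with values in the interval [ε₀, 1] for some ε₀ > 0, with mean μ = E[p_1], and let p̄_n = (1/n)·∑_{i=1}^n p_i. Define R₂(μ − x) = −log(x/μ) − (μ − x)/μ − (μ − x)²/(2μ²) for x ∈ [ε₀, 1]. Then E[R₂(μ − p̄_n)] = E[(μ − p̄_n)³]/(3μ³) + E[(μ − p̄_n)⁴]/(4μ⁴) + E[R₄(μ − p̄_n)], where R₄(μ − x) = −log(x/μ) − ∑_{k=1}^4 (μ − x)^k/(k·μ^k), and consequently E[R₂(μ − p̄_n)] = O(1/n²). -/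
open MeasureTheory ProbabilityTheory

lemma integ_of_bound {Ω : Type*} [MeasurableSpace Ω] (P : Measure Ω) [IsProbabilityMeasure P]
    (f : Ω → ℝ) (hf : Measurable f) (C : ℝ) (h : ∀ ω, |f ω| ≤ C) : Integrable f P :=
  (integrable_const C).mono' hf.aestronglyMeasurable (ae_of_all _ fun ω => by
    simpa [Real.norm_eq_abs] using h ω)

lemma moment_step {Ω : Type*} [MeasurableSpace Ω] (P : Measure Ω) [IsProbabilityMeasure P]
    (Y Z : Ω → ℝ) (hY : Measurable Y) (hZ : Measurable Z)
    (CY CZ : ℝ) (hbY : ∀ ω, |Y ω| ≤ CY) (hbZ : ∀ ω, |Z ω| ≤ CZ)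
    (hInd : IndepFun Y Z P) (hEY : ∫ ω, Y ω ∂P = 0) (hEZ : ∫ ω, Z ω ∂P = 0) :
    (∫ ω, (Y ω + Z ω) ∂P = 0) ∧
    (∫ ω, (Y ω + Z ω)^2 ∂P = ∫ ω, Y ω^2 ∂P + ∫ ω, Z ω^2 ∂P) ∧
    (∫ ω, (Y ω + Z ω)^3 ∂P = ∫ ω, Y ω^3 ∂P + ∫ ω, Z ω^3 ∂P) ∧
    (∫ ω, (Y ω + Z ω)^4 ∂P = ∫ ω, Y ω^4 ∂P + 6 * (∫ ω, Y ω^2 ∂P) * (∫ ω, Z ω^2 ∂P)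
        + ∫ ω, Z ω^4 ∂P) := by
  have iY : ∀ a : ℕ, Integrable (fun ω => Y ω ^ a) P := fun a =>
    integ_of_bound P _ (hY.pow_const a) (|CY| ^ a) (fun ω => by
      rw [abs_pow]; exact pow_le_pow_left₀ (abs_nonneg _) ((hbY ω).trans (le_abs_self _)) a)
  have iZ : ∀ b : ℕ, Integrable (fun ω => Z ω ^ b) P := fun b =>
    integ_of_bound P _ (hZ.pow_const b) (|CZ| ^ b) (fun ω => by
      rw [abs_pow]; exact pow_le_pow_left₀ (abs_nonneg _) ((hbZ ω).trans (le_abs_self _)) b)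
  have iM : ∀ a b : ℕ, Integrable (fun ω => Y ω ^ a * Z ω ^ b) P := fun a b =>
    integ_of_bound P _ ((hY.pow_const a).mul (hZ.pow_const b)) (|CY| ^ a * |CZ| ^ b)
      (fun ω => by
        rw [abs_mul, abs_pow, abs_pow]
        exact mul_le_mul (pow_le_pow_left₀ (abs_nonneg _) ((hbY ω).trans (le_abs_self _)) a)
          (pow_le_pow_left₀ (abs_nonneg _) ((hbZ ω).trans (le_abs_self _)) b)
          (pow_nonneg (abs_nonneg _) b) (pow_nonneg (abs_nonneg _) a))
  have key : ∀ a b : ℕ, ∫ ω, Y ω ^ a * Z ω ^ b ∂P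
      = (∫ ω, Y ω ^ a ∂P) * (∫ ω, Z ω ^ b ∂P) := by
    intro a b
    have h := (hInd.comp (measurable_id.pow_const a) (measurable_id.pow_const b)
      ).integral_mul_eq_mul_integral (iY a).aestronglyMeasurable (iZ b).aestronglyMeasurable
    simpa [Function.comp] using h
  have hEY1 : ∫ ω, Y ω ^ 1 ∂P = 0 := by simpa using hEY
  have hEZ1 : ∫ ω, Z ω ^ 1 ∂P = 0 := by simpa using hEZ
  refine ⟨?_, ?_, ?_, ?_⟩
  · rw [integral_add (by simpa using iY 1) (by simpa using iZ 1), hEY, hEZ, add_zero]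
  · have h1 : Integrable (fun ω => 2 * (Y ω ^ 1 * Z ω ^ 1) + Z ω ^ 2) P :=
      ((iM 1 1).const_mul 2).add (iZ 2)
    have h2 : Integrable (fun ω => 2 * (Y ω ^ 1 * Z ω ^ 1)) P := (iM 1 1).const_mul 2
    rw [show (fun ω => (Y ω + Z ω) ^ 2)
        = fun ω => Y ω ^ 2 + (2 * (Y ω ^ 1 * Z ω ^ 1) + Z ω ^ 2) from funext fun ω => by ring,
      integral_add (iY 2) h1, integral_add h2 (iZ 2), integral_const_mul, key, hEZ1]
    ring
  · have h1 : Integrable (fun ω => 3 * (Y ω ^ 2 * Z ω ^ 1) + (3 * (Y ω ^ 1 * Z ω ^ 2) + Z ω ^ 3)) P :=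
      ((iM 2 1).const_mul 3).add (((iM 1 2).const_mul 3).add (iZ 3))
    have h2 : Integrable (fun ω => 3 * (Y ω ^ 1 * Z ω ^ 2) + Z ω ^ 3) P :=
      ((iM 1 2).const_mul 3).add (iZ 3)
    have h3 : Integrable (fun ω => 3 * (Y ω ^ 2 * Z ω ^ 1)) P := (iM 2 1).const_mul 3
    have h4 : Integrable (fun ω => 3 * (Y ω ^ 1 * Z ω ^ 2)) P := (iM 1 2).const_mul 3
    rw [show (fun ω => (Y ω + Z ω) ^ 3)
        = fun ω => Y ω ^ 3 + (3 * (Y ω ^ 2 * Z ω ^ 1) + (3 * (Y ω ^ 1 * Z ω ^ 2) + Z ω ^ 3))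
        from funext fun ω => by ring,
      integral_add (iY 3) h1, integral_add h3 h2, integral_add h4 (iZ 3),
      integral_const_mul, integral_const_mul, key, key, hEZ1, hEY1]
    ring
  · have h1 : Integrable (fun ω => 4 * (Y ω ^ 3 * Z ω ^ 1) + (6 * (Y ω ^ 2 * Z ω ^ 2)
        + (4 * (Y ω ^ 1 * Z ω ^ 3) + Z ω ^ 4))) P :=
      ((iM 3 1).const_mul 4).add (((iM 2 2).const_mul 6).add (((iM 1 3).const_mul 4).add (iZ 4)))
    have h2 : Integrable (fun ω => 6 * (Y ω ^ 2 * Z ω ^ 2) + (4 * (Y ω ^ 1 * Z ω ^ 3) + Z ω ^ 4)) P :=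
      ((iM 2 2).const_mul 6).add (((iM 1 3).const_mul 4).add (iZ 4))
    have h3 : Integrable (fun ω => 4 * (Y ω ^ 1 * Z ω ^ 3) + Z ω ^ 4) P :=
      ((iM 1 3).const_mul 4).add (iZ 4)
    have h4 : Integrable (fun ω => 4 * (Y ω ^ 3 * Z ω ^ 1)) P := (iM 3 1).const_mul 4
    have h5 : Integrable (fun ω => 6 * (Y ω ^ 2 * Z ω ^ 2)) P := (iM 2 2).const_mul 6
    have h6 : Integrable (fun ω => 4 * (Y ω ^ 1 * Z ω ^ 3)) P := (iM 1 3).const_mul 4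
    rw [show (fun ω => (Y ω + Z ω) ^ 4)
        = fun ω => Y ω ^ 4 + (4 * (Y ω ^ 3 * Z ω ^ 1) + (6 * (Y ω ^ 2 * Z ω ^ 2)
            + (4 * (Y ω ^ 1 * Z ω ^ 3) + Z ω ^ 4)))
        from funext fun ω => by ring,
      integral_add (iY 4) h1, integral_add h4 h2, integral_add h5 h3, integral_add h6 (iZ 4),
      integral_const_mul, integral_const_mul, integral_const_mul, key, key, key, hEZ1, hEY1]
    ring

lemma sum_moments {Ω : Type*} [MeasurableSpace Ω] (P : Measure Ω) [IsProbabilityMeasure P]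
    (X : ℕ → Ω → ℝ) (hmeas : ∀ i, Measurable (X i))
    (hb : ∀ i ω, |X i ω| ≤ 1)
    (hindep : iIndepFun X P)
    (hE : ∀ i, ∫ ω, X i ω ∂P = 0)
    (m2 m3 m4 : ℝ)
    (h2 : ∀ i, ∫ ω, X i ω ^ 2 ∂P = m2) (h3 : ∀ i, ∫ ω, X i ω ^ 3 ∂P = m3)
    (h4 : ∀ i, ∫ ω, X i ω ^ 4 ∂P = m4) :
    ∀ n : ℕ,
    (∫ ω, (∑ i ∈ Finset.range n, X i ω) ∂P = 0) ∧
    (∫ ω, (∑ i ∈ Finset.range n, X i ω) ^ 2 ∂P = n * m2) ∧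
    (∫ ω, (∑ i ∈ Finset.range n, X i ω) ^ 3 ∂P = n * m3) ∧
    (∫ ω, (∑ i ∈ Finset.range n, X i ω) ^ 4 ∂P
      = n * m4 + 3 * ((n : ℝ) ^ 2 - n) * m2 ^ 2) := by
  intro n
  induction n with
  | zero => simp
  | succ n ih =>
    obtain ⟨ih1, ih2, ih3, ih4⟩ := ih
    have hYmeas : Measurable (fun ω => ∑ i ∈ Finset.range n, X i ω) :=
      Finset.measurable_sum _ fun i _ => hmeas i
    have hbY : ∀ ω, |∑ i ∈ Finset.range n, X i ω| ≤ (n : ℝ) := by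
      intro ω
      calc |∑ i ∈ Finset.range n, X i ω| ≤ ∑ i ∈ Finset.range n, |X i ω| :=
            Finset.abs_sum_le_sum_abs _ _
        _ ≤ ∑ i ∈ Finset.range n, (1 : ℝ) := Finset.sum_le_sum fun i _ => hb i ω
        _ = n := by simp
    have hInd : IndepFun (fun ω => ∑ i ∈ Finset.range n, X i ω) (X n) P := by
      have := hindep.indepFun_finsetSum_of_notMem hmeas (Finset.notMem_range_self (n := n))
      convert this using 1
      ext ω
      simp [Finset.sum_apply]
    obtain ⟨s1, s2, s3, s4⟩ := moment_step P _ (X n) hYmeas (hmeas n) n 1 hbY (hb n)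
      hInd ih1 (hE n)
    have hsum : ∀ ω, ∑ i ∈ Finset.range (n + 1), X i ω
        = (∑ i ∈ Finset.range n, X i ω) + X n ω := fun ω => Finset.sum_range_succ _ n
    refine ⟨?_, ?_, ?_, ?_⟩
    · rw [show (fun ω => ∑ i ∈ Finset.range (n+1), X i ω)
          = fun ω => (∑ i ∈ Finset.range n, X i ω) + X n ω from funext hsum]
      exact s1
    · rw [show (fun ω => (∑ i ∈ Finset.range (n+1), X i ω) ^ 2)
          = fun ω => ((∑ i ∈ Finset.range n, X i ω) + X n ω) ^ 2 from funext fun ω => by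
            rw [hsum]]
      rw [s2, ih2, h2 n]; push_cast; ring
    · rw [show (fun ω => (∑ i ∈ Finset.range (n+1), X i ω) ^ 3)
          = fun ω => ((∑ i ∈ Finset.range n, X i ω) + X n ω) ^ 3 from funext fun ω => by
            rw [hsum]]
      rw [s3, ih3, h3 n]; push_cast; ring
    · rw [show (fun ω => (∑ i ∈ Finset.range (n+1), X i ω) ^ 4)
          = fun ω => ((∑ i ∈ Finset.range n, X i ω) + X n ω) ^ 4 from funext fun ω => by
            rw [hsum]]
      rw [s4, ih2, ih4, h2 n, h4 n]; push_cast; ring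
lemma rem_decomp (μ x : ℝ) : taylorRem 2 μ x
    = (μ - x) ^ 3 / (3 * μ ^ 3) + (μ - x) ^ 4 / (4 * μ ^ 4) + taylorRem 4 μ x := by
  unfold taylorRem
  rw [Finset.sum_Icc_succ_top (by norm_num : (1:ℕ) ≤ 4),
    Finset.sum_Icc_succ_top (by norm_num : (1:ℕ) ≤ 3)]
  push_cast
  ring

lemma taylorRem_continuousOn (m : ℕ) (μ : ℝ) (ε₀ : ℝ) (hε₀ : 0 < ε₀) (hμ : 0 < μ) :
    ContinuousOn (taylorRem m μ) (Set.Icc ε₀ 1) := by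
  unfold taylorRem
  apply ContinuousOn.sub
  · apply ContinuousOn.neg
    apply ContinuousOn.log
    · exact (continuous_id.div_const μ).continuousOn
    · intro x hx
      have : (0:ℝ) < x := lt_of_lt_of_le hε₀ hx.1
      positivity
  · exact Continuous.continuousOn (by continuity)

lemma rem4_bound (ε₀ : ℝ) (hε₀ : 0 < ε₀) (μ : ℝ) (hμl : ε₀ ≤ μ) (hμu : μ ≤ 1) :
    ∃ C > (0:ℝ), ∀ x ∈ Set.Icc ε₀ 1, |taylorRem 4 μ x| ≤ C * (μ - x) ^ 4 := by
  have hμ0 : (0:ℝ) < μ := lt_of_lt_of_le hε₀ hμl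
  obtain ⟨M, hM⟩ := (isCompact_Icc).exists_bound_of_continuousOn
    (taylorRem_continuousOn 4 μ ε₀ hε₀ hμ0)
  set M' : ℝ := max M 1 with hM'def
  have hM'1 : (1:ℝ) ≤ M' := le_max_right _ _
  have hM'0 : (0:ℝ) < M' := lt_of_lt_of_le one_pos hM'1
  refine ⟨16 * M' / ε₀ ^ 4, by positivity, ?_⟩
  intro x hx
  have hx0 : (0:ℝ) < x := lt_of_lt_of_le hε₀ hx.1
  set t : ℝ := (μ - x) / μ with ht
  have hxt : 1 - t = x / μ := by
    rw [ht]
    field_simp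
    ring
  have e : taylorRem 4 μ x
      = -((∑ i ∈ Finset.range 4, t ^ (i + 1) / (i + 1)) + Real.log (1 - t)) := by
    unfold taylorRem
    rw [hxt]
    have h2 : ∑ k ∈ Finset.Icc (1:ℕ) 4, (μ - x) ^ k / ((k:ℝ) * μ ^ k)
        = ∑ i ∈ Finset.range 4, t ^ (i + 1) / (i + 1) := by
      rw [Finset.sum_Icc_succ_top (by norm_num : (1:ℕ) ≤ 4),
          Finset.sum_Icc_succ_top (by norm_num : (1:ℕ) ≤ 3),
          Finset.sum_Icc_succ_top (by norm_num : (1:ℕ) ≤ 2),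
          Finset.Icc_self, Finset.sum_singleton]
      simp only [Finset.sum_range_succ, Finset.sum_range_zero, ht]
      push_cast
      field_simp
      ring
    rw [h2]; ring
  have ht4 : (μ - x) ^ 4 = t ^ 4 * μ ^ 4 := by
    rw [ht]; field_simp
  by_cases hcase : |t| ≤ 1 / 2
  · have h1 : |t| < 1 := lt_of_le_of_lt hcase (by norm_num)
    have hb := Real.abs_log_sub_add_sum_range_le h1 4
    rw [e, abs_neg]
    have h2 : |t| ^ 5 / (1 - |t|) ≤ 2 * |t| ^ 5 := by
      rw [div_le_iff₀ (by linarith)]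
      nlinarith [abs_nonneg t, pow_nonneg (abs_nonneg t) 5]
    have h3 : (2:ℝ) * |t| ^ 5 ≤ |t| ^ 4 := by
      nlinarith [pow_nonneg (abs_nonneg t) 4]
    have h4 : |t| ^ 4 = t ^ 4 := by rw [← abs_pow]; exact abs_of_nonneg (by positivity)
    have h5 : t ^ 4 ≤ 16 * M' / ε₀ ^ 4 * (μ - x) ^ 4 := by
      rw [ht4]
      have hμ4 : ε₀ ^ 4 ≤ μ ^ 4 := pow_le_pow_left₀ hε₀.le hμl 4
      have ht40 : (0:ℝ) ≤ t ^ 4 := by positivity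
      rw [div_mul_eq_mul_div, le_div_iff₀ (by positivity)]
      have ha : t ^ 4 * ε₀ ^ 4 ≤ t ^ 4 * μ ^ 4 := mul_le_mul_of_nonneg_left hμ4 ht40
      have hb' : t ^ 4 * μ ^ 4 ≤ 16 * M' * (t ^ 4 * μ ^ 4) :=
        le_mul_of_one_le_left (by positivity) (by linarith)
      linarith
    calc |(∑ i ∈ Finset.range 4, t ^ (i + 1) / (i + 1)) + Real.log (1 - t)|
        ≤ |t| ^ 5 / (1 - |t|) := hb
      _ ≤ 2 * |t| ^ 5 := h2
      _ ≤ |t| ^ 4 := h3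
      _ = t ^ 4 := h4
      _ ≤ _ := h5
  · push_neg at hcase
    have hMx : |taylorRem 4 μ x| ≤ M' := by
      have := hM x hx
      rw [Real.norm_eq_abs] at this
      exact this.trans (le_max_left _ _)
    have hlow : ε₀ ^ 4 / 16 ≤ (μ - x) ^ 4 := by
      rw [ht4]
      have h1 : (1:ℝ) / 16 ≤ t ^ 4 := by
        have : (1/2 : ℝ) ^ 4 ≤ |t| ^ 4 := pow_le_pow_left₀ (by norm_num) hcase.le 4
        rw [← abs_pow] at this
        calc (1:ℝ)/16 = (1/2:ℝ)^4 := by norm_num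
          _ ≤ |t ^ 4| := this
          _ = t ^ 4 := abs_of_nonneg (by positivity)
      have h2 : ε₀ ^ 4 ≤ μ ^ 4 := pow_le_pow_left₀ hε₀.le hμl 4
      nlinarith [mul_le_mul h1 h2 (by positivity : (0:ℝ) ≤ ε₀ ^ 4)
        (by nlinarith : (0:ℝ) ≤ t ^ 4)]
    calc |taylorRem 4 μ x| ≤ M' := hMx
      _ ≤ 16 * M' / ε₀ ^ 4 * (μ - x) ^ 4 := by
        rw [div_mul_eq_mul_div, le_div_iff₀ (by positivity)]
        nlinarith [mul_le_mul_of_nonneg_left hlow (by positivity : (0:ℝ) ≤ 16 * M')]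

set_option maxHeartbeats 1000000 in
/-- For i.i.d. `p i` with values in `[ε₀, 1]`, `ε₀ > 0`, mean `μ`, the second-order Taylor
remainder satisfies the exact decomposition
`E[R₂(μ - p̄_n)] = E[(μ - p̄_n)³]/(3μ³) + E[(μ - p̄_n)⁴]/(4μ⁴) + E[R₄(μ - p̄_n)]`,
and consequently `E[R₂(μ - p̄_n)] = O(1/n²)`. -/
theorem remainder_two_decomposition_and_O
    {Ω : Type*} [MeasurableSpace Ω] (P : Measure Ω) [IsProbabilityMeasure P]
    (ε₀ : ℝ) (hε₀ : 0 < ε₀)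
    (p : ℕ → Ω → ℝ) (hmeas : ∀ i, Measurable (p i))
    (hrange : ∀ i ω, p i ω ∈ Set.Icc ε₀ 1)
    (hindep : iIndepFun p P)
    (hident : ∀ i, IdentDistrib (p i) (p 0) P P)
    (μ : ℝ) (hμ : μ = ∫ ω, p 0 ω ∂P) :
    (∀ n : ℕ, 0 < n →
      ∫ ω, taylorRem 2 μ ((∑ i ∈ Finset.range n, p i ω) / n) ∂P
        = (∫ ω, (μ - (∑ i ∈ Finset.range n, p i ω) / n) ^ 3 ∂P) / (3 * μ ^ 3)
          + (∫ ω, (μ - (∑ i ∈ Finset.range n, p i ω) / n) ^ 4 ∂P) / (4 * μ ^ 4)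
          + ∫ ω, taylorRem 4 μ ((∑ i ∈ Finset.range n, p i ω) / n) ∂P) ∧
    (∃ C > (0 : ℝ), ∃ N : ℕ, 0 < N ∧ ∀ n : ℕ, N ≤ n →
      |∫ ω, taylorRem 2 μ ((∑ i ∈ Finset.range n, p i ω) / n) ∂P| ≤ C / (n : ℝ) ^ 2) := by
  -- basic facts about μ
  have hpb : ∀ i ω, |p i ω| ≤ 1 := fun i ω => by
    have h := hrange i ω
    rw [abs_le]
    exact ⟨by linarith [h.1], h.2⟩
  have hip : ∀ i, Integrable (p i) P := fun i =>
    integ_of_bound P _ (hmeas i) 1 (hpb i)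
  have hμl : ε₀ ≤ μ := by
    rw [hμ]
    calc ε₀ = ∫ _ω, ε₀ ∂P := by simp
      _ ≤ ∫ ω, p 0 ω ∂P := integral_mono (integrable_const ε₀) (hip 0)
          (fun ω => (hrange 0 ω).1)
  have hμu : μ ≤ 1 := by
    rw [hμ]
    calc ∫ ω, p 0 ω ∂P ≤ ∫ _ω, (1:ℝ) ∂P := integral_mono (hip 0) (integrable_const 1)
          (fun ω => (hrange 0 ω).2)
      _ = 1 := by simp
  have hμ0 : (0:ℝ) < μ := lt_of_lt_of_le hε₀ hμl
  -- the centered variables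
  have hXmeas : ∀ i, Measurable (fun ω => p i ω - μ) := fun i => (hmeas i).sub_const μ
  have hXb : ∀ (i : ℕ) ω, |p i ω - μ| ≤ 1 := fun i ω => by
    have h := hrange i ω
    rw [abs_le]
    exact ⟨by linarith [h.1], by linarith [h.2]⟩
  have hXindep : iIndepFun (fun i ω => p i ω - μ) P :=
    hindep.comp (fun _ => fun x => x - μ) (fun _ => measurable_id.sub_const μ)
  have hXE : ∀ i, ∫ ω, (p i ω - μ) ∂P = 0 := by
    intro i
    have h1 : ∫ ω, p i ω ∂P = μ := by rw [hμ]; exact (hident i).integral_eq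
    rw [integral_sub (hip i) (integrable_const μ), h1]
    simp
  -- moments
  have hident' : ∀ (i : ℕ) (k : ℕ),
      ∫ ω, (p i ω - μ) ^ k ∂P = ∫ ω, (p 0 ω - μ) ^ k ∂P := fun i k =>
    ((hident i).comp ((measurable_id.sub_const μ).pow_const k)).integral_eq
  set m2 : ℝ := ∫ ω, (p 0 ω - μ) ^ 2 ∂P with hm2def
  set m3 : ℝ := ∫ ω, (p 0 ω - μ) ^ 3 ∂P with hm3def
  set m4 : ℝ := ∫ ω, (p 0 ω - μ) ^ 4 ∂P with hm4def
  have hmom := sum_moments P (fun i ω => p i ω - μ) hXmeas hXb hXindep hXE m2 m3 m4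
    (fun i => hident' i 2) (fun i => hident' i 3) (fun i => hident' i 4)
  have habs : ∀ k : ℕ, |∫ ω, (p 0 ω - μ) ^ k ∂P| ≤ 1 := by
    intro k
    have := norm_integral_le_of_norm_le_const (μ := P) (C := 1)
      (f := fun ω => (p 0 ω - μ) ^ k) (ae_of_all _ fun ω => by
        rw [Real.norm_eq_abs, abs_pow]
        exact pow_le_one₀ (abs_nonneg _) (hXb 0 ω))
    simpa [Real.norm_eq_abs] using this
  have hm3abs : |m3| ≤ 1 := habs 3
  have hm2abs : |m2| ≤ 1 := habs 2
  have hm4abs : |m4| ≤ 1 := habs 4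
  -- the R4 bound
  obtain ⟨C4, hC4, hR4b⟩ := rem4_bound ε₀ hε₀ μ hμl hμu
  -- per-n facts
  have key : ∀ n : ℕ, 0 < n →
      (∫ ω, taylorRem 2 μ ((∑ i ∈ Finset.range n, p i ω) / n) ∂P
        = (∫ ω, (μ - (∑ i ∈ Finset.range n, p i ω) / n) ^ 3 ∂P) / (3 * μ ^ 3)
          + (∫ ω, (μ - (∑ i ∈ Finset.range n, p i ω) / n) ^ 4 ∂P) / (4 * μ ^ 4)
          + ∫ ω, taylorRem 4 μ ((∑ i ∈ Finset.range n, p i ω) / n) ∂P) ∧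
      (|∫ ω, (μ - (∑ i ∈ Finset.range n, p i ω) / n) ^ 3 ∂P| ≤ 1 / (n:ℝ) ^ 2) ∧
      (0 ≤ ∫ ω, (μ - (∑ i ∈ Finset.range n, p i ω) / n) ^ 4 ∂P) ∧
      (∫ ω, (μ - (∑ i ∈ Finset.range n, p i ω) / n) ^ 4 ∂P ≤ 4 / (n:ℝ) ^ 2) ∧
      (|∫ ω, taylorRem 4 μ ((∑ i ∈ Finset.range n, p i ω) / n) ∂P|
        ≤ C4 * ∫ ω, (μ - (∑ i ∈ Finset.range n, p i ω) / n) ^ 4 ∂P) := by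
    intro n hn
    have hnR : (0:ℝ) < n := by exact_mod_cast hn
    have hn1 : (1:ℝ) ≤ n := by exact_mod_cast hn
    have hqmeas : Measurable (fun ω => (∑ i ∈ Finset.range n, p i ω) / (n:ℝ)) :=
      (Finset.measurable_sum _ fun i _ => hmeas i).div_const _
    have hqmem : ∀ ω, (∑ i ∈ Finset.range n, p i ω) / (n:ℝ) ∈ Set.Icc ε₀ 1 := by
      intro ω
      constructor
      · rw [le_div_iff₀ hnR]
        calc ε₀ * n = ∑ _i ∈ Finset.range n, ε₀ := by
              rw [Finset.sum_const, Finset.card_range, nsmul_eq_mul]; ring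
          _ ≤ ∑ i ∈ Finset.range n, p i ω := Finset.sum_le_sum fun i _ => (hrange i ω).1
      · rw [div_le_one hnR]
        calc ∑ i ∈ Finset.range n, p i ω ≤ ∑ _i ∈ Finset.range n, (1:ℝ) :=
              Finset.sum_le_sum fun i _ => (hrange i ω).2
          _ = n := by simp
    have hqb : ∀ ω, |μ - (∑ i ∈ Finset.range n, p i ω) / (n:ℝ)| ≤ 1 := fun ω => by
      have h := hqmem ω
      rw [abs_le]
      exact ⟨by linarith [h.2], by linarith [h.1]⟩
    have hpt : ∀ ω, μ - (∑ i ∈ Finset.range n, p i ω) / (n:ℝ)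
        = -(∑ i ∈ Finset.range n, (p i ω - μ)) / n := by
      intro ω
      rw [Finset.sum_sub_distrib, Finset.sum_const, Finset.card_range, nsmul_eq_mul]
      field_simp
      ring
    obtain ⟨-, -, hS3, hS4⟩ := hmom n
    -- integral identities for δ³ and δ⁴
    have hδ3eq : ∫ ω, (μ - (∑ i ∈ Finset.range n, p i ω) / (n:ℝ)) ^ 3 ∂P
        = -((n:ℝ) * m3) / (n:ℝ) ^ 3 := by
      rw [show (fun ω => (μ - (∑ i ∈ Finset.range n, p i ω) / (n:ℝ)) ^ 3)
          = fun ω => (-1 / (n:ℝ) ^ 3) * (∑ i ∈ Finset.range n, (p i ω - μ)) ^ 3 from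
          funext fun ω => by rw [hpt ω]; ring,
        integral_const_mul, hS3]
      ring
    have hδ4eq : ∫ ω, (μ - (∑ i ∈ Finset.range n, p i ω) / (n:ℝ)) ^ 4 ∂P
        = ((n:ℝ) * m4 + 3 * ((n:ℝ) ^ 2 - n) * m2 ^ 2) / (n:ℝ) ^ 4 := by
      rw [show (fun ω => (μ - (∑ i ∈ Finset.range n, p i ω) / (n:ℝ)) ^ 4)
          = fun ω => (1 / (n:ℝ) ^ 4) * (∑ i ∈ Finset.range n, (p i ω - μ)) ^ 4 from
          funext fun ω => by rw [hpt ω]; ring,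
        integral_const_mul, hS4]
      ring
    -- integrability
    have hI3 : Integrable
        (fun ω => (μ - (∑ i ∈ Finset.range n, p i ω) / (n:ℝ)) ^ 3 / (3 * μ ^ 3)) P := by
      apply integ_of_bound P _ (((measurable_const.sub hqmeas).pow_const 3).div_const _)
        (1 / (3 * μ ^ 3))
      intro ω
      rw [abs_div, abs_of_pos (show (0:ℝ) < 3 * μ ^ 3 by positivity), abs_pow]
      gcongr
      exact pow_le_one₀ (abs_nonneg _) (hqb ω)
    have hI4 : Integrable
        (fun ω => (μ - (∑ i ∈ Finset.range n, p i ω) / (n:ℝ)) ^ 4 / (4 * μ ^ 4)) P := by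
      apply integ_of_bound P _ (((measurable_const.sub hqmeas).pow_const 4).div_const _)
        (1 / (4 * μ ^ 4))
      intro ω
      rw [abs_div, abs_of_pos (show (0:ℝ) < 4 * μ ^ 4 by positivity), abs_pow]
      gcongr
      exact pow_le_one₀ (abs_nonneg _) (hqb ω)
    have hIδ4 : Integrable
        (fun ω => (μ - (∑ i ∈ Finset.range n, p i ω) / (n:ℝ)) ^ 4) P := by
      apply integ_of_bound P _ ((measurable_const.sub hqmeas).pow_const 4) 1
      intro ω
      rw [abs_pow]
      exact pow_le_one₀ (abs_nonneg _) (hqb ω)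
    have hmR4 : Measurable
        (fun ω => taylorRem 4 μ ((∑ i ∈ Finset.range n, p i ω) / (n:ℝ))) := by
      simp only [taylorRem]
      exact ((Real.measurable_log.comp (hqmeas.div_const μ)).neg).sub
        (Finset.measurable_sum _ fun k _ =>
          ((measurable_const.sub hqmeas).pow_const k).div_const _)
    have hR4pt : ∀ ω, |taylorRem 4 μ ((∑ i ∈ Finset.range n, p i ω) / (n:ℝ))|
        ≤ C4 * (μ - (∑ i ∈ Finset.range n, p i ω) / (n:ℝ)) ^ 4 := fun ω =>
      hR4b _ (hqmem ω)
    have hIR4 : Integrable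
        (fun ω => taylorRem 4 μ ((∑ i ∈ Finset.range n, p i ω) / (n:ℝ))) P := by
      apply integ_of_bound P _ hmR4 C4
      intro ω
      refine (hR4pt ω).trans ?_
      have h1 : (μ - (∑ i ∈ Finset.range n, p i ω) / (n:ℝ)) ^ 4 ≤ 1 := by
        calc (μ - (∑ i ∈ Finset.range n, p i ω) / (n:ℝ)) ^ 4
            = |μ - (∑ i ∈ Finset.range n, p i ω) / (n:ℝ)| ^ 4 := by
              rw [← abs_pow, abs_of_nonneg (by positivity)]
          _ ≤ 1 := pow_le_one₀ (abs_nonneg _) (hqb ω)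
      nlinarith
    have hI44 : Integrable (fun ω =>
        (μ - (∑ i ∈ Finset.range n, p i ω) / (n:ℝ)) ^ 4 / (4 * μ ^ 4)
          + taylorRem 4 μ ((∑ i ∈ Finset.range n, p i ω) / (n:ℝ))) P := hI4.add hIR4
    refine ⟨?_, ?_, ?_, ?_, ?_⟩
    · -- the decomposition
      rw [show (fun ω => taylorRem 2 μ ((∑ i ∈ Finset.range n, p i ω) / (n:ℝ)))
          = fun ω => (μ - (∑ i ∈ Finset.range n, p i ω) / (n:ℝ)) ^ 3 / (3 * μ ^ 3)
            + ((μ - (∑ i ∈ Finset.range n, p i ω) / (n:ℝ)) ^ 4 / (4 * μ ^ 4)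
              + taylorRem 4 μ ((∑ i ∈ Finset.range n, p i ω) / (n:ℝ))) from
          funext fun ω => by rw [rem_decomp]; ring,
        integral_add hI3 hI44, integral_add hI4 hIR4,
        integral_div, integral_div]
      ring
    · -- third moment bound
      rw [hδ3eq, abs_div, abs_neg, abs_mul, abs_pow,
        abs_of_nonneg (by positivity : (0:ℝ) ≤ (n:ℝ)),
        div_le_div_iff₀ (by positivity) (by positivity)]
      have h1 : (n:ℝ) * |m3| ≤ (n:ℝ) * 1 := mul_le_mul_of_nonneg_left hm3abs hnR.le
      nlinarith [pow_nonneg hnR.le 2]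
    · -- fourth moment nonneg
      exact integral_nonneg fun ω => by positivity
    · -- fourth moment bound
      rw [hδ4eq, div_le_div_iff₀ (by positivity) (by positivity)]
      have hm2sq : m2 ^ 2 ≤ 1 := by
        have h := abs_le.mp hm2abs
        nlinarith
      have hm4le : m4 ≤ 1 := (le_abs_self m4).trans hm4abs
      have ha : (0:ℝ) ≤ (n:ℝ) ^ 2 - n := by nlinarith
      have hb : ((n:ℝ) ^ 2 - n) * m2 ^ 2 ≤ (n:ℝ) ^ 2 - n := by
        nlinarith [mul_le_mul_of_nonneg_left hm2sq ha]
      have hc : (n:ℝ) * m4 ≤ n := by nlinarith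
      have hnum : (n:ℝ) * m4 + 3 * ((n:ℝ) ^ 2 - n) * m2 ^ 2 ≤ 4 * (n:ℝ) ^ 2 := by nlinarith
      nlinarith [mul_le_mul_of_nonneg_right hnum (pow_nonneg hnR.le 2)]
    · -- R4 integral bound
      calc |∫ ω, taylorRem 4 μ ((∑ i ∈ Finset.range n, p i ω) / (n:ℝ)) ∂P|
          ≤ ∫ ω, |taylorRem 4 μ ((∑ i ∈ Finset.range n, p i ω) / (n:ℝ))| ∂P :=
            by
              simpa [Real.norm_eq_abs] using norm_integral_le_integral_norm (μ := P)
                (fun ω => taylorRem 4 μ ((∑ i ∈ Finset.range n, p i ω) / (n:ℝ)))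
        _ ≤ ∫ ω, C4 * (μ - (∑ i ∈ Finset.range n, p i ω) / (n:ℝ)) ^ 4 ∂P :=
            integral_mono hIR4.abs (hIδ4.const_mul C4) hR4pt
        _ = C4 * ∫ ω, (μ - (∑ i ∈ Finset.range n, p i ω) / (n:ℝ)) ^ 4 ∂P :=
            integral_const_mul _ _
  constructor
  · exact fun n hn => (key n hn).1
  · refine ⟨1 / (3 * ε₀ ^ 3) + 1 / ε₀ ^ 4 + 4 * C4, by positivity, 1, one_pos, ?_⟩
    intro n hn
    have hn0 : 0 < n := hn
    have hnR : (0:ℝ) < n := by exact_mod_cast hn0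
    obtain ⟨hdec, h3, h4nn, h4, hR⟩ := key n hn0
    rw [hdec]
    have hε₁ : ε₀ ≤ 1 := hμl.trans hμu
    have e1 : |(∫ ω, (μ - (∑ i ∈ Finset.range n, p i ω) / n) ^ 3 ∂P) / (3 * μ ^ 3)|
        ≤ (1 / (3 * ε₀ ^ 3)) / (n:ℝ) ^ 2 := by
      rw [abs_div, abs_of_pos (show (0:ℝ) < 3 * μ ^ 3 by positivity),
        show (1 / (3 * ε₀ ^ 3)) / (n:ℝ) ^ 2 = (1 / (n:ℝ) ^ 2) / (3 * ε₀ ^ 3) by ring]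
      apply div_le_div₀ (by positivity) h3 (by positivity)
      have : ε₀ ^ 3 ≤ μ ^ 3 := pow_le_pow_left₀ hε₀.le hμl 3
      linarith
    have e2 : |(∫ ω, (μ - (∑ i ∈ Finset.range n, p i ω) / n) ^ 4 ∂P) / (4 * μ ^ 4)|
        ≤ (1 / ε₀ ^ 4) / (n:ℝ) ^ 2 := by
      rw [abs_div, abs_of_pos (show (0:ℝ) < 4 * μ ^ 4 by positivity),
        abs_of_nonneg h4nn,
        show (1 / ε₀ ^ 4) / (n:ℝ) ^ 2 = (4 / (n:ℝ) ^ 2) / (4 * ε₀ ^ 4) by ring]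
      apply div_le_div₀ (by positivity) h4 (by positivity)
      have : ε₀ ^ 4 ≤ μ ^ 4 := pow_le_pow_left₀ hε₀.le hμl 4
      linarith
    have e3 : |∫ ω, taylorRem 4 μ ((∑ i ∈ Finset.range n, p i ω) / n) ∂P|
        ≤ (4 * C4) / (n:ℝ) ^ 2 := by
      refine hR.trans ?_
      calc C4 * ∫ ω, (μ - (∑ i ∈ Finset.range n, p i ω) / n) ^ 4 ∂P
          ≤ C4 * (4 / (n:ℝ) ^ 2) := mul_le_mul_of_nonneg_left h4 hC4.le
        _ = (4 * C4) / (n:ℝ) ^ 2 := by ring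
    calc |(∫ ω, (μ - (∑ i ∈ Finset.range n, p i ω) / n) ^ 3 ∂P) / (3 * μ ^ 3)
          + (∫ ω, (μ - (∑ i ∈ Finset.range n, p i ω) / n) ^ 4 ∂P) / (4 * μ ^ 4)
          + ∫ ω, taylorRem 4 μ ((∑ i ∈ Finset.range n, p i ω) / n) ∂P|
        ≤ |(∫ ω, (μ - (∑ i ∈ Finset.range n, p i ω) / n) ^ 3 ∂P) / (3 * μ ^ 3)
          + (∫ ω, (μ - (∑ i ∈ Finset.range n, p i ω) / n) ^ 4 ∂P) / (4 * μ ^ 4)|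
          + |∫ ω, taylorRem 4 μ ((∑ i ∈ Finset.range n, p i ω) / n) ∂P| := abs_add_le _ _
      _ ≤ |(∫ ω, (μ - (∑ i ∈ Finset.range n, p i ω) / n) ^ 3 ∂P) / (3 * μ ^ 3)|
          + |(∫ ω, (μ - (∑ i ∈ Finset.range n, p i ω) / n) ^ 4 ∂P) / (4 * μ ^ 4)|
          + |∫ ω, taylorRem 4 μ ((∑ i ∈ Finset.range n, p i ω) / n) ∂P| := by
            have := abs_add_le ((∫ ω, (μ - (∑ i ∈ Finset.range n, p i ω) / n) ^ 3 ∂P) / (3 * μ ^ 3))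
              ((∫ ω, (μ - (∑ i ∈ Finset.range n, p i ω) / n) ^ 4 ∂P) / (4 * μ ^ 4))
            linarith
      _ ≤ (1 / (3 * ε₀ ^ 3)) / (n:ℝ) ^ 2 + (1 / ε₀ ^ 4) / (n:ℝ) ^ 2
          + (4 * C4) / (n:ℝ) ^ 2 := by linarith
      _ = (1 / (3 * ε₀ ^ 3) + 1 / ε₀ ^ 4 + 4 * C4) / (n:ℝ) ^ 2 := by ring
end
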